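/- Let (R, m) be a commutative local ring whose maximal ideal m is nonzero and nilpotent. Then the flat dimension of m is infinite, and hence the weak global dimension of R is infinite. -/

import Mathlib

universe u v

/-- A chained (valuation) ring: the ideals are totally ordered by inclusion. -/
def IsChainedRing (R : Type*) [CommRing R] : Prop :=
  ∀ I J : Ideal R, I ≤ J ∨ J ≤ I

/-- `R` has zero divisors. -/
def HasZeroDivisors (R : Type*) [CommRing R] : Prop :=
  ∃ a b : R, a ≠ 0 ∧ b ≠ 0 ∧ a * b = 0

/-- An arithmetical ring: the localization at every maximal ideal is a chained ring. -/
def IsArithmetical (R : Type*) [CommRing R] : Prop :=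
  ∀ (P : Ideal R) (hP : P.IsMaximal),
    letI := hP.isPrime
    ∀ I J : Ideal (Localization.AtPrime P), I ≤ J ∨ J ≤ I

/-- `FlatDimLE R n M` : the flat (weak) dimension of `M` is at most `n`. -/
def FlatDimLE (R : Type u) [CommRing R] : ℕ → ModuleCat.{u} R → Prop
  | 0, M => Module.Flat R M
  | (n+1), M => ∃ (F : ModuleCat.{u} R) (f : F →ₗ[R] M), Function.Surjective f ∧
      Module.Flat R F ∧ FlatDimLE R n (ModuleCat.of R (LinearMap.ker f))

/-- The flat (weak) dimension of a module, valued in `ℕ∞` (`⊤` if no finite flat resolution). -/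
noncomputable def flatDim (R : Type u) [CommRing R] (M : ModuleCat.{u} R) : ℕ∞ :=
  sInf {n : ℕ∞ | ∃ k : ℕ, n = (k : ℕ∞) ∧ FlatDimLE R k M}

/-- The weak global dimension of `R` is at most `n`. -/
def WgdimLE (R : Type u) [CommRing R] (n : ℕ) : Prop :=
  ∀ M : ModuleCat.{u} R, FlatDimLE R n M

/-- The weak global dimension of `R` is infinite. -/
def HasInfiniteWeakGlobalDimension (R : Type u) [CommRing R] : Prop :=
  ∀ n : ℕ, ∃ M : ModuleCat.{u} R, ¬ FlatDimLE R n M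

/-- The content ideal of a polynomial: the ideal generated by its coefficients. -/
def contentIdeal {R : Type*} [CommRing R] (f : Polynomial R) : Ideal R :=
  Ideal.span (Set.range f.coeff)

/-- A Gaussian ring: `c(fg) = c(f)c(g)` for all polynomials. -/
def IsGaussian (R : Type*) [CommRing R] : Prop :=
  ∀ f g : Polynomial R, contentIdeal (f * g) = contentIdeal f * contentIdeal g

/-- A Prüfer ring: every finitely generated regular ideal is invertible. -/
def IsPruferRing (R : Type u) [CommRing R] : Prop :=
  ∀ I : Ideal R, I.FG → (∃ x ∈ I, x ∈ nonZeroDivisors R) →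
    IsUnit (I : FractionalIdeal (nonZeroDivisors R) (FractionRing R))

/-- A quasi-projective module: every map to a quotient of `M` lifts to an endomorphism. -/
def IsQuasiProjective (R : Type u) [CommRing R] (M : Type v) [AddCommGroup M] [Module R M] : Prop :=
  ∀ (N : Submodule R M) (g : M →ₗ[R] M ⧸ N), ∃ h : M →ₗ[R] M, N.mkQ.comp h = g

open Function

section Aux
variable {R : Type u} [CommRing R]

lemma nak_bot {n : ℕ} {I : Ideal R} (hI : I ^ n = ⊥)
    {M : Type v} [AddCommGroup M] [Module R M] (N : Submodule R M) (h : N ≤ I • N) : N = ⊥ := by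
  have key : ∀ j, N ≤ I ^ j • N := by
    intro j; induction j with
    | zero => simpa using le_refl N
    | succ j ih =>
        calc N ≤ I • N := h
        _ ≤ I • (I ^ j • N) := smul_mono_right I ih
        _ = (I • I ^ j) • N := (Submodule.smul_assoc _ _ _).symm
        _ = I ^ (j+1) • N := by rw [smul_eq_mul, ← pow_succ']
  have := key n
  rw [hI, Submodule.bot_smul] at this
  exact le_bot_iff.mp this

lemma nak_top {n : ℕ} {I : Ideal R} (hI : I ^ n = ⊥)
    {M : Type v} [AddCommGroup M] [Module R M] (N : Submodule R M)
    (h : ⊤ ≤ N ⊔ I • (⊤ : Submodule R M)) : N = ⊤ := by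
  have h2 : (⊤ : Submodule R (M ⧸ N)) ≤ I • ⊤ := by
    intro x _
    obtain ⟨y, rfl⟩ := N.mkQ_surjective x
    have hy : y ∈ N ⊔ I • (⊤ : Submodule R M) := h trivial
    rw [Submodule.mem_sup] at hy
    obtain ⟨a, ha, b, hb, rfl⟩ := hy
    have hab : N.mkQ (a + b) = N.mkQ b := by
      rw [map_add]
      have : N.mkQ a = 0 := by simpa [Submodule.mkQ_apply] using (Submodule.Quotient.mk_eq_zero N).2 ha
      rw [this, zero_add]
    rw [hab]
    have := Submodule.map_smul'' I (⊤ : Submodule R M) N.mkQ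
    rw [Submodule.map_top, Submodule.range_mkQ] at this
    rw [← this]
    exact Submodule.mem_map_of_mem hb
  have := nak_bot hI _ h2
  rw [← Submodule.ker_mkQ N]
  rw [eq_top_iff]; intro x _
  have : N.mkQ x ∈ (⊥ : Submodule R (M ⧸ N)) := this ▸ trivial
  simpa using this

end Aux

section Star
open TensorProduct LinearMap

variable {R : Type u} [CommRing R]

/-- multiplication map `I ⊗ P → P`. -/
noncomputable def thetaMap (I : Ideal R) (P : Type v) [AddCommGroup P] [Module R P] :
    I ⊗[R] P →ₗ[R] P :=
  TensorProduct.lift ((LinearMap.lsmul R P).comp I.subtype)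

@[simp] lemma thetaMap_tmul (I : Ideal R) {P : Type v} [AddCommGroup P] [Module R P]
    (t : I) (p : P) : thetaMap I P (t ⊗ₜ p) = (t : R) • p := by
  simp [thetaMap]

lemma thetaMap_surj (I : Ideal R) {P : Type v} [AddCommGroup P] [Module R P]
    {y : P} (hy : y ∈ I • (⊤ : Submodule R P)) : ∃ ξ, thetaMap I P ξ = y := by
  refine Submodule.smul_induction_on hy (fun r hr p _ => ⟨⟨r, hr⟩ ⊗ₜ p, by simp⟩) ?_
  rintro y z ⟨ξ, rfl⟩ ⟨η, rfl⟩
  exact ⟨ξ + η, by simp⟩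

lemma thetaMap_mem_smul (I : Ideal R) {P : Type v} [AddCommGroup P] [Module R P]
    (N : Submodule R P) (η : I ⊗[R] ↥N) :
    thetaMap I P (lTensor I N.subtype η) ∈ I • N := by
  induction η using TensorProduct.induction_on with
  | zero => simp
  | tmul t x => simpa using Submodule.smul_mem_smul t.2 x.2
  | add a b ha hb => rw [map_add, map_add]; exact Submodule.add_mem _ ha hb

lemma thetaMap_injective (I : Ideal R) {M : Type v} [AddCommGroup M] [Module R M]
    [Module.Flat R M] : Function.Injective (thetaMap I M) := by
  have h1 : Function.Injective (rTensor M I.subtype) :=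
    (Module.Flat.iff_rTensor_injective' (R := R) (M := M)).mp ‹_› I
  have h2 : thetaMap I M = (TensorProduct.lid R M).toLinearMap ∘ₗ rTensor M I.subtype := by
    apply TensorProduct.ext'
    intro t m
    simp
  rw [h2]
  exact (TensorProduct.lid R M).injective.comp h1

/-- Key flatness consequence: kernel of presentation of flat module intersected with `I•⊤`. -/
lemma star_flat {M : Type v} {P : Type w} [AddCommGroup M] [Module R M] [AddCommGroup P] [Module R P]
    [Module.Flat R M] (π : P →ₗ[R] M) (hπ : Function.Surjective π) (I : Ideal R)
    {x : P} (hx : π x = 0) (hxI : x ∈ I • (⊤ : Submodule R P)) :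
    x ∈ I • (LinearMap.ker π) := by
  obtain ⟨ξ, rfl⟩ := thetaMap_surj I hxI
  have hcomm : (thetaMap I M) ∘ₗ (lTensor I π) = π ∘ₗ thetaMap I P := by
    apply TensorProduct.ext'
    intro t p
    simp
  have hζ : thetaMap I M (lTensor I π ξ) = 0 := by
    rw [← LinearMap.comp_apply, hcomm]; exact hx
  have hζ0 : lTensor I π ξ = 0 := thetaMap_injective I (by simpa using hζ)
  have hexact : Function.Exact (lTensor I (LinearMap.ker π).subtype) (lTensor I π) :=
    lTensor_exact I (LinearMap.exact_subtype_ker_map π) hπ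
  obtain ⟨η, rfl⟩ := (hexact _).mp hζ0
  rw [← LinearMap.comp_apply]
  exact thetaMap_mem_smul I _ η

end Star

section Chunk2
open Finsupp

variable {R : Type u} [CommRing R]

lemma finsupp_mem_smul {T : Type v} (I : Ideal R) (c : T →₀ R) (hc : ∀ t, c t ∈ I) :
    c ∈ I • (⊤ : Submodule R (T →₀ R)) := by
  classical
  have hrepr : c = ∑ t ∈ c.support, Finsupp.single t (c t) := by
    exact (Finsupp.sum_single c).symm
  rw [hrepr]
  refine Submodule.sum_mem _ fun t _ => ?_
  have : Finsupp.single t (c t) = (c t) • Finsupp.single t (1 : R) := by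
    rw [Finsupp.smul_single, smul_eq_mul, mul_one]
  rw [this]
  exact Submodule.smul_mem_smul (hc t) trivial

variable [IsLocalRing R]

local notation "𝔪" => IsLocalRing.maximalIdeal R

/-- annihilation: anything in `𝔪^(n-1)` kills `𝔪 • ⊤`. -/
lemma ann_smul_top {n : ℕ} (hn : 𝔪 ^ n = ⊥) (hpos : 0 < n)
    {F : Type v} [AddCommGroup F] [Module R F] {t : R} (ht : t ∈ 𝔪 ^ (n-1))
    {y : F} (hy : y ∈ 𝔪 • (⊤ : Submodule R F)) : t • y = 0 := by
  refine Submodule.smul_induction_on hy (fun r hr p _ => ?_) (fun a b ha hb => ?_)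
  · rw [smul_smul]
    have : t * r ∈ 𝔪 ^ n := by
      have h1 : t * r ∈ (𝔪 ^ (n-1)) * 𝔪 := Ideal.mul_mem_mul ht hr
      have h2 : (𝔪 ^ (n-1)) * 𝔪 = 𝔪 ^ n := by
        rw [← pow_succ, Nat.sub_add_cancel hpos]
      rwa [h2] at h1
    rw [hn] at this
    rw [Submodule.mem_bot] at this
    rw [this, zero_smul]
  · rw [smul_add, ha, hb, add_zero]

/-- Lemma 3: coordinates of an element of a free submodule lying in `𝔪 • F` are in `𝔪`. -/
lemma free_coords {n : ℕ} (hn : 𝔪 ^ n = ⊥) (hn1 : 𝔪 ^ (n-1) ≠ ⊥) (hpos : 0 < n)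
    {K : Type v} {F : Type w} [AddCommGroup K] [Module R K] [AddCommGroup F] [Module R F]
    (ι : K →ₗ[R] F) (hι : Function.Injective ι)
    {J : Type u'} {u : J → K} (hu : LinearIndependent R u)
    (c : J →₀ R) (hc : ι (Finsupp.linearCombination R u c) ∈ 𝔪 • (⊤ : Submodule R F)) :
    ∀ j, c j ∈ 𝔪 := by
  intro j
  by_contra hj
  have hunit : IsUnit (c j) := by
    rwa [← IsLocalRing.notMem_maximalIdeal]
  obtain ⟨t, htmem, ht0⟩ := Submodule.exists_mem_ne_zero_of_ne_bot hn1
  have h1 : t • ι (Finsupp.linearCombination R u c) = 0 := ann_smul_top hn hpos htmem hc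
  rw [← map_smul, ← map_smul] at h1
  have h2 : Finsupp.linearCombination R u (t • c) = 0 := hι (by simpa using h1)
  have h3 : t • c = 0 := by
    apply hu
    simpa using h2
  have h4 : t * c j = 0 := by
    have := DFunLike.congr_fun h3 j
    simpa using this
  exact ht0 (hunit.mul_left_injective (by simpa using h4))

/-- Main lemma: a family independent and spanning mod `𝔪` over a flat module is a basis-family. -/
lemma indep_span_of_mod_m {n : ℕ} (hn : 𝔪 ^ n = ⊥)
    {F : Type v} [AddCommGroup F] [Module R F] [Module.Flat R F]
    {T : Type w} (w : T → F)
    (hspan : ⊤ ≤ Submodule.span R (Set.range w) ⊔ (𝔪 • ⊤))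
    (hindep : ∀ c : T →₀ R,
      Finsupp.linearCombination R w c ∈ 𝔪 • (⊤ : Submodule R F) → ∀ t, c t ∈ 𝔪) :
    LinearIndependent R w ∧ Submodule.span R (Set.range w) = ⊤ := by
  have hspan' : Submodule.span R (Set.range w) = ⊤ := nak_top hn _ hspan
  set φ := Finsupp.linearCombination R w with hφdef
  have hφ : Function.Surjective φ := by
    rw [← LinearMap.range_eq_top, hφdef, Finsupp.range_linearCombination, hspan']
  have hker : LinearMap.ker φ ≤ 𝔪 • (LinearMap.ker φ) := by
    intro x hx
    have hx0 : φ x = 0 := hx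
    have hx' : x ∈ 𝔪 • (⊤ : Submodule R (T →₀ R)) :=
      finsupp_mem_smul 𝔪 x (hindep x (by rw [hx0]; exact Submodule.zero_mem _))
    exact star_flat φ hφ 𝔪 hx0 hx'
  have hkerbot : LinearMap.ker φ = ⊥ := nak_bot hn _ hker
  exact ⟨LinearMap.ker_eq_bot.mp hkerbot, hspan'⟩

lemma mk_linearCombination (I : Ideal R) {F : Type v} [AddCommGroup F] [Module R F]
    {T : Type w} (u : T → F) (c : T →₀ R) :
    (I • (⊤ : Submodule R F)).mkQ (Finsupp.linearCombination R u c)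
      = Finsupp.linearCombination (R ⧸ I)
          (fun t => (I • (⊤ : Submodule R F)).mkQ (u t))
          (c.mapRange (Ideal.Quotient.mk I) (map_zero _)) := by
  classical
  induction c using Finsupp.induction_linear with
  | zero => simp
  | add f g hf hg =>
      rw [map_add, map_add, Finsupp.mapRange_add (map_add _), map_add, hf, hg]
  | single a r =>
      rw [Finsupp.linearCombination_single, Finsupp.mapRange_single,
        Finsupp.linearCombination_single, map_smul]
      rfl

lemma exists_mapRange_lift (I : Ideal R) {T : Type w} (l : T →₀ R ⧸ I) :
    ∃ c : T →₀ R, c.mapRange (Ideal.Quotient.mk I) (map_zero _) = l := by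
  classical
  choose f hf using fun a : R ⧸ I => Ideal.Quotient.mk_surjective (I := I) a
  refine ⟨l.mapRange (fun a => if a = 0 then 0 else f a) (by simp), ?_⟩
  ext t
  rw [Finsupp.mapRange_apply, Finsupp.mapRange_apply]
  by_cases h : l t = 0 <;> simp [h, hf]

lemma sumExtend_inl {K : Type*} [DivisionRing K] {V : Type*} [AddCommGroup V] [Module K V]
    {J : Type*} {v : J → V} (hv : LinearIndependent K v) (j : J) :
    Module.Basis.sumExtend hv (Sum.inl j) = v j := by
  classical
  simp only [Module.Basis.sumExtend, Module.Basis.reindex_apply, Equiv.symm_symm]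
  erw [Module.Basis.extend_apply_self]
  rfl

lemma extend_family {n : ℕ} (hn : 𝔪 ^ n = ⊥)
    {F : Type v} [AddCommGroup F] [Module R F] [Module.Flat R F]
    {J : Type w} (v : J → F)
    (hv : ∀ c : J →₀ R,
      Finsupp.linearCombination R v c ∈ 𝔪 • (⊤ : Submodule R F) → ∀ j, c j ∈ 𝔪) :
    ∃ (L : Type v) (w : J ⊕ L → F), (∀ j, w (Sum.inl j) = v j) ∧
      LinearIndependent R w ∧ Submodule.span R (Set.range w) = ⊤ := by
  classical
  letI : Field (R ⧸ 𝔪) := Ideal.Quotient.field 𝔪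
  set mkV := (𝔪 • (⊤ : Submodule R F)).mkQ with hmkV
  set vb : J → (F ⧸ (𝔪 • (⊤ : Submodule R F))) := fun j => mkV (v j) with hvb
  have hkv : LinearIndependent (R ⧸ 𝔪) vb := by
    rw [linearIndependent_iff]
    intro l hl
    obtain ⟨c, rfl⟩ := exists_mapRange_lift 𝔪 l
    have h1 : mkV (Finsupp.linearCombination R v c) = 0 := by
      rw [hmkV, mk_linearCombination]; exact hl
    have h2 : Finsupp.linearCombination R v c ∈ 𝔪 • (⊤ : Submodule R F) := by
      rwa [hmkV, Submodule.mkQ_apply, Submodule.Quotient.mk_eq_zero] at h1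
    have h3 := hv c h2
    ext t
    rw [Finsupp.mapRange_apply]
    simpa using Ideal.Quotient.eq_zero_iff_mem.mpr (h3 t)
  have hsurjmk := Submodule.mkQ_surjective (𝔪 • (⊤ : Submodule R F))
  set w : J ⊕ (Module.Basis.sumExtendIndex hkv) → F := Sum.elim v
    (fun s => (hsurjmk ((Module.Basis.sumExtend hkv) (Sum.inr s))).choose) with hw
  have hwmk : ∀ t, mkV (w t) = (Module.Basis.sumExtend hkv) t := by
    rintro (j | s)
    · show mkV (v j) = _
      rw [sumExtend_inl hkv j]
    · exact (hsurjmk ((Module.Basis.sumExtend hkv) (Sum.inr s))).choose_spec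
  have key := indep_span_of_mod_m hn w ?_ ?_
  · exact ⟨_, w, fun j => rfl, key.1, key.2⟩
  · -- spanning mod 𝔪
    intro x _
    obtain ⟨c, hc⟩ := exists_mapRange_lift 𝔪 ((Module.Basis.sumExtend hkv).repr (mkV x))
    have h1 : mkV (Finsupp.linearCombination R w c) = mkV x := by
      rw [hmkV, mk_linearCombination]
      rw [show (fun t => (𝔪 • (⊤ : Submodule R F)).mkQ (w t)) = (Module.Basis.sumExtend hkv)
        from funext hwmk]
      rw [hc, Module.Basis.linearCombination_repr]
    have h2 : x - Finsupp.linearCombination R w c ∈ 𝔪 • (⊤ : Submodule R F) := by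
      rw [← Submodule.Quotient.mk_eq_zero]
      have h4 : mkV (x - Finsupp.linearCombination R w c) = 0 := by
        rw [map_sub, h1, sub_self]
      simpa [hmkV] using h4
    have h3 : Finsupp.linearCombination R w c ∈ Submodule.span R (Set.range w) := by
      rw [← Finsupp.range_linearCombination]
      exact ⟨c, rfl⟩
    rw [Submodule.mem_sup]
    exact ⟨_, h3, _, h2, by abel⟩
  · -- independence mod 𝔪
    intro c hc t
    have h1 : mkV (Finsupp.linearCombination R w c) = 0 := by
      rw [hmkV, Submodule.mkQ_apply, Submodule.Quotient.mk_eq_zero]; exact hc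
    rw [hmkV, mk_linearCombination,
      show (fun t => (𝔪 • (⊤ : Submodule R F)).mkQ (w t)) = (Module.Basis.sumExtend hkv)
        from funext hwmk] at h1
    have h2 := linearIndependent_iff.mp (Module.Basis.sumExtend hkv).linearIndependent _ h1
    have h3 := DFunLike.congr_fun h2 t
    rw [Finsupp.mapRange_apply] at h3
    rw [← Ideal.Quotient.eq_zero_iff_mem]
    simpa using h3

lemma flat_free {n : ℕ} (hn : 𝔪 ^ n = ⊥)
    {M : Type v} [AddCommGroup M] [Module R M] [Module.Flat R M] :
    ∃ (T : Type v) (u : T → M), LinearIndependent R u ∧ Submodule.span R (Set.range u) = ⊤ := by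
  obtain ⟨L, w, _, hwi, hws⟩ := extend_family hn (PEmpty.elim : PEmpty.{1} → M)
    (fun c _ j => j.elim)
  exact ⟨_, w, hwi, hws⟩

lemma ker_quotient_flat {n : ℕ} (hn : 𝔪 ^ n = ⊥) (hn1 : 𝔪 ^ (n-1) ≠ ⊥) (hpos : 0 < n)
    {F M : Type v} [AddCommGroup F] [Module R F] [AddCommGroup M] [Module R M]
    [Module.Flat R F] (f : F →ₗ[R] M) (hf : Function.Surjective f)
    (hK : Module.Flat R (LinearMap.ker f)) : Module.Flat R M := by
  classical
  haveI := hK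
  obtain ⟨T, u, hui, hus⟩ := flat_free hn (M := ↥(LinearMap.ker f))
  set v : T → F := fun t => ((u t : ↥(LinearMap.ker f)) : F) with hvdef
  have hvsub : ∀ c : T →₀ R,
      (LinearMap.ker f).subtype (Finsupp.linearCombination R u c)
        = Finsupp.linearCombination R v c := by
    intro c
    rw [Finsupp.apply_linearCombination]
    rfl
  have hvc : ∀ c : T →₀ R,
      Finsupp.linearCombination R v c ∈ 𝔪 • (⊤ : Submodule R F) → ∀ t, c t ∈ 𝔪 := by
    intro c hc
    exact free_coords hn hn1 hpos (LinearMap.ker f).subtype (Submodule.injective_subtype _)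
      hui c (by rwa [hvsub])
  obtain ⟨L, w, hwl, hwi, hws⟩ := extend_family hn v hvc
  -- ker f = span of range v
  have hkerspan : LinearMap.ker f = Submodule.span R (Set.range v) := by
    apply le_antisymm
    · intro x hx
      have hx1 : (⟨x, hx⟩ : ↥(LinearMap.ker f)) ∈ Submodule.span R (Set.range u) := by
        rw [hus]; trivial
      have hx2 := Submodule.mem_map_of_mem (f := (LinearMap.ker f).subtype) hx1
      rwa [Submodule.map_span, ← Set.range_comp] at hx2
    · rw [Submodule.span_le]
      rintro _ ⟨t, rfl⟩
      exact (u t).2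
  -- the projection
  set φw := LinearEquiv.ofBijective (Finsupp.linearCombination R w)
    ⟨hwi, by rw [← LinearMap.range_eq_top, Finsupp.range_linearCombination, hws]⟩ with hφw
  set ψ : F →ₗ[R] (L →₀ R) :=
    (LinearMap.snd R (T →₀ R) (L →₀ R)) ∘ₗ
      (Finsupp.sumFinsuppLEquivProdFinsupp R).toLinearMap ∘ₗ (φw.symm : F →ₗ[R] (T ⊕ L →₀ R))
    with hψ
  have hψs : Function.Surjective ψ := by
    intro y
    refine ⟨φw ((Finsupp.sumFinsuppLEquivProdFinsupp R).symm (0, y)), ?_⟩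
    rw [hψ]
    simp only [LinearMap.coe_comp, Function.comp_apply, LinearEquiv.coe_coe,
      LinearEquiv.symm_apply_apply, LinearEquiv.apply_symm_apply, LinearMap.snd_apply]
  have hkerψ : LinearMap.ker ψ = LinearMap.ker f := by
    rw [hkerspan]
    apply le_antisymm
    · intro x hx
      have hx0 : ∀ l, (φw.symm x) (Sum.inr l) = 0 := by
        intro l
        have h5 := DFunLike.congr_fun (LinearMap.mem_ker.mp hx) l
        rw [hψ] at h5
        simp only [LinearMap.coe_comp, Function.comp_apply, LinearEquiv.coe_coe,
          LinearMap.snd_apply, Finsupp.coe_zero, Pi.zero_apply] at h5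
        rwa [Finsupp.snd_sumFinsuppLEquivProdFinsupp] at h5
      have hx1 : x = Finsupp.linearCombination R w (φw.symm x) := (φw.apply_symm_apply x).symm
      rw [hx1, Finsupp.linearCombination_apply, Finsupp.sum]
      refine Submodule.sum_mem _ ?_
      rintro (t | l) _
      · rw [hwl t]
        exact Submodule.smul_mem _ _ (Submodule.subset_span ⟨t, rfl⟩)
      · rw [hx0 l, zero_smul]
        exact Submodule.zero_mem _
    · rw [Submodule.span_le]
      rintro _ ⟨t, rfl⟩
      have h1 : v t = w (Sum.inl t) := (hwl t).symm
      have h2 : φw.symm (v t) = Finsupp.single (Sum.inl t) 1 := by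
        rw [LinearEquiv.symm_apply_eq]
        show v t = Finsupp.linearCombination R w (Finsupp.single (Sum.inl t) 1)
        rw [Finsupp.linearCombination_single, one_smul, hwl t]
      rw [SetLike.mem_coe, LinearMap.mem_ker, hψ]
      simp only [LinearMap.coe_comp, Function.comp_apply, LinearEquiv.coe_coe, h2]
      ext l
      rw [LinearMap.snd_apply, Finsupp.snd_sumFinsuppLEquivProdFinsupp]
      simpa using Finsupp.single_eq_of_ne (show Sum.inl t ≠ Sum.inr l by simp)
  have e1 : (F ⧸ LinearMap.ker f) ≃ₗ[R] M := f.quotKerEquivOfSurjective hf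
  have e2 : (F ⧸ LinearMap.ker ψ) ≃ₗ[R] (L →₀ R) := ψ.quotKerEquivOfSurjective hψs
  have e3 : (F ⧸ LinearMap.ker f) ≃ₗ[R] (F ⧸ LinearMap.ker ψ) :=
    Submodule.quotEquivOfEq _ _ hkerψ.symm
  exact Module.Flat.of_linearEquiv (e1.symm.trans (e3.trans e2))

lemma m_not_flat {n : ℕ} (hn : 𝔪 ^ n = ⊥) (hn1 : 𝔪 ^ (n-1) ≠ ⊥) (hpos : 0 < n)
    (hm : 𝔪 ≠ ⊥) : ¬ Module.Flat R ↥𝔪 := by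
  intro hflat
  obtain ⟨T, u, hui, hus⟩ := flat_free hn (M := ↥𝔪)
  have hTne : Nonempty T := by
    by_contra hT
    rw [not_nonempty_iff] at hT
    rw [Set.range_eq_empty u, Submodule.span_empty] at hus
    apply hm
    rw [eq_bot_iff]
    intro x hx
    have h1 : (⟨x, hx⟩ : ↥𝔪) ∈ (⊥ : Submodule R ↥𝔪) := hus ▸ trivial
    rw [Submodule.mem_bot] at h1
    have h2 : x = 0 := congr_arg Subtype.val h1
    simpa using h2
  obtain ⟨t, ht, ht0⟩ := Submodule.exists_mem_ne_zero_of_ne_bot hn1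
  obtain ⟨t₀⟩ := hTne
  have hzero : t • u t₀ = 0 := by
    apply Subtype.ext
    show t • ((u t₀ : R)) = 0
    have h1 : t * (u t₀ : R) ∈ (𝔪 ^ (n-1)) * 𝔪 := Ideal.mul_mem_mul ht (u t₀).2
    rw [← pow_succ, Nat.sub_add_cancel hpos, hn, Submodule.mem_bot] at h1
    rw [smul_eq_mul, h1]
  have h4 : Finsupp.single t₀ t = (0 : T →₀ R) := by
    apply hui
    rw [map_zero, Finsupp.linearCombination_single, hzero]
  have h5 := DFunLike.congr_fun h4 t₀
  simp only [Finsupp.single_eq_same, Finsupp.coe_zero, Pi.zero_apply] at h5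
  exact ht0 h5

lemma flat_of_flatDimLE {R : Type u} [CommRing R] [IsLocalRing R] {n : ℕ}
    (hn : (IsLocalRing.maximalIdeal R) ^ n = ⊥)
    (hn1 : (IsLocalRing.maximalIdeal R) ^ (n-1) ≠ ⊥) (hpos : 0 < n) :
    ∀ (k : ℕ) (M : ModuleCat.{u} R), FlatDimLE R k M → Module.Flat R M := by
  intro k
  induction k with
  | zero => intro M h; exact h
  | succ k ih =>
      intro M h
      obtain ⟨F, f, hsurj, hF, hker⟩ := h
      haveI := hF
      exact ker_quotient_flat hn hn1 hpos f hsurj (ih _ hker)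

/-- A local ring with nonzero nilpotent maximal ideal has `fd(m) = ∞` and hence
infinite weak global dimension. -/
theorem stmt_12 (R : Type u) [CommRing R] [IsLocalRing R]
    (hm : IsLocalRing.maximalIdeal R ≠ ⊥)
    (hnil : ∃ n : ℕ, 0 < n ∧ IsLocalRing.maximalIdeal R ^ n = ⊥) :
    flatDim R (ModuleCat.of R ↥(IsLocalRing.maximalIdeal R)) = ⊤ ∧
      HasInfiniteWeakGlobalDimension R := by
  classical
  have hex : ∃ k : ℕ, (IsLocalRing.maximalIdeal R) ^ k = ⊥ := ⟨hnil.choose, hnil.choose_spec.2⟩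
  set n := Nat.find hex with hndef
  have hn : (IsLocalRing.maximalIdeal R) ^ n = ⊥ := Nat.find_spec hex
  have hpos : 0 < n := by
    rcases Nat.eq_zero_or_pos n with h0 | h
    · exfalso
      rw [h0, pow_zero, Ideal.one_eq_top] at hn
      exact absurd (congr_arg (fun I : Ideal R => (1:R) ∈ I) hn)
        (by simp [Submodule.mem_bot])
    · exact h
  have hn1 : (IsLocalRing.maximalIdeal R) ^ (n-1) ≠ ⊥ := by
    intro h
    exact Nat.find_min hex (Nat.sub_lt hpos one_pos) h
  have notflat : ∀ k : ℕ, ¬ FlatDimLE R k (ModuleCat.of R ↥(IsLocalRing.maximalIdeal R)) := by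
    intro k hk
    exact m_not_flat hn hn1 hpos hm (flat_of_flatDimLE hn hn1 hpos k _ hk)
  constructor
  · have hempty : {n : ℕ∞ | ∃ k : ℕ, n = (k : ℕ∞) ∧
        FlatDimLE R k (ModuleCat.of R ↥(IsLocalRing.maximalIdeal R))} = ∅ := by
      ext x
      simp only [Set.mem_setOf_eq, Set.mem_empty_iff_false, iff_false, not_exists]
      rintro k ⟨rfl, hk⟩
      exact notflat k hk
    rw [flatDim, hempty, sInf_empty]
  · intro k
    exact ⟨ModuleCat.of R ↥(IsLocalRing.maximalIdeal R), notflat k⟩
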